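/- Let X follow the elliptical distribution E(μ,Σ,g) and set ξ₁ := (X-μ)ᵀΣ^{-1}(X-μ). Then the random variable ψ_a(ξ₁) has a Lebesgue density on (0,∞) given by t ↦ s_d·ρ_a(t); that is, the pushforward of the law of X under x ↦ ψ_a((x-μ)ᵀΣ^{-1}(x-μ)) is the measure with density s_d·ρ_a restricted to (0,∞). -/

import Mathlib

open Real Filter MeasureTheory Matrix
open scoped ENNReal

/-- The transformation `ψ_a(ξ) = -a + (a^{d/2} + ξ^{d/2})^{2/d}`. -/
noncomputable def psi (d : ℕ) (a : ℝ) (ξ : ℝ) : ℝ :=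
  -a + (a ^ ((d : ℝ) / 2) + ξ ^ ((d : ℝ) / 2)) ^ (2 / (d : ℝ))

/-- The inverse transformation `Ψ_a(t) = ((t+a)^{d/2} - a^{d/2})^{2/d}`. -/
noncomputable def Psi (d : ℕ) (a : ℝ) (t : ℝ) : ℝ :=
  ((t + a) ^ ((d : ℝ) / 2) - a ^ ((d : ℝ) / 2)) ^ (2 / (d : ℝ))

/-- The normalized generator `g̃(ξ) = ξ^{(d-2)/2}·g(ξ)`. -/
noncomputable def gtilde (d : ℕ) (g : ℝ → ℝ) (ξ : ℝ) : ℝ :=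
  ξ ^ (((d : ℝ) - 2) / 2) * g ξ

/-- The function `z_a(ξ) = g̃(ξ)/ψ_a'(ξ)`. -/
noncomputable def za (d : ℕ) (a : ℝ) (g : ℝ → ℝ) (ξ : ℝ) : ℝ :=
  gtilde d g ξ / deriv (psi d a) ξ

/-- The function `ρ_a = z_a ∘ Ψ_a`. -/
noncomputable def rho (d : ℕ) (a : ℝ) (g : ℝ → ℝ) (t : ℝ) : ℝ :=
  za d a g (Psi d a t)

/-- The quadratic form `(x-μ)ᵀ Σ⁻¹ (x-μ)`. -/
noncomputable def quadForm {d : ℕ} (μv : Fin d → ℝ) (S : Matrix (Fin d) (Fin d) ℝ)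
    (x : Fin d → ℝ) : ℝ :=
  (x - μv) ⬝ᵥ (S⁻¹ *ᵥ (x - μv))

/-- The elliptical density `f(x) = |Σ|^{-1/2} g((x-μ)ᵀ Σ⁻¹ (x-μ))`. -/
noncomputable def ellDensity {d : ℕ} (g : ℝ → ℝ) (μv : Fin d → ℝ)
    (S : Matrix (Fin d) (Fin d) ℝ) (x : Fin d → ℝ) : ℝ :=
  |S.det| ^ (-(1 : ℝ) / 2) * g (quadForm μv S x)

/-! ### Auxiliary lemmas about `psi`, `Psi` -/

noncomputable def Dpsi (d : ℕ) (a : ℝ) (ξ : ℝ) : ℝ :=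
  ξ ^ ((d : ℝ) / 2 - 1) * (a ^ ((d : ℝ) / 2) + ξ ^ ((d : ℝ) / 2)) ^ (2 / (d : ℝ) - 1)

section Aux
variable {d : ℕ} {a : ℝ}

lemma hd0 (hd : 2 ≤ d) : (0:ℝ) < (d:ℝ) := by exact_mod_cast Nat.lt_of_lt_of_le Nat.zero_lt_two hd

lemma one_le_half (hd : 2 ≤ d) : (1:ℝ) ≤ (d:ℝ)/2 := by
  have : (2:ℝ) ≤ (d:ℝ) := by exact_mod_cast hd
  linarith

lemma mul_halves (hd : 2 ≤ d) : (d:ℝ)/2 * (2/(d:ℝ)) = 1 := by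
  have : (d:ℝ) ≠ 0 := (hd0 hd).ne'
  field_simp

lemma hasDerivAt_psi (hd : 2 ≤ d) (ha : 0 < a) {ξ : ℝ} (hξ : 0 < ξ) :
    HasDerivAt (psi d a) (Dpsi d a ξ) ξ := by
  have hA : (0:ℝ) < a ^ ((d : ℝ) / 2) := rpow_pos_of_pos ha _
  have hu : (0:ℝ) < a ^ ((d : ℝ) / 2) + ξ ^ ((d : ℝ) / 2) :=
    add_pos hA (rpow_pos_of_pos hξ _)
  have h1 : HasDerivAt (fun ξ : ℝ => a ^ ((d : ℝ) / 2) + ξ ^ ((d : ℝ) / 2))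
      ((d : ℝ)/2 * ξ ^ ((d : ℝ)/2 - 1)) ξ := by
    simpa using (Real.hasDerivAt_rpow_const (p := (d:ℝ)/2) (Or.inl hξ.ne')).const_add
      (a ^ ((d : ℝ) / 2))
  have h2 := (h1.rpow_const (p := 2/(d:ℝ)) (Or.inl hu.ne'))
  have h3 := h2.const_add (-a)
  refine h3.congr_deriv ?_
  unfold Dpsi
  have : (d:ℝ) ≠ 0 := (hd0 hd).ne'
  field_simp

lemma deriv_psi (hd : 2 ≤ d) (ha : 0 < a) {ξ : ℝ} (hξ : 0 < ξ) :
    deriv (psi d a) ξ = Dpsi d a ξ := (hasDerivAt_psi hd ha hξ).deriv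

lemma Dpsi_pos (hd : 2 ≤ d) (ha : 0 < a) {ξ : ℝ} (hξ : 0 < ξ) : 0 < Dpsi d a ξ :=
  mul_pos (rpow_pos_of_pos hξ _)
    (rpow_pos_of_pos (add_pos (rpow_pos_of_pos ha _) (rpow_pos_of_pos hξ _)) _)

lemma psi_pos (hd : 2 ≤ d) (ha : 0 < a) {ξ : ℝ} (hξ : 0 < ξ) : 0 < psi d a ξ := by
  have hA : (0:ℝ) < a ^ ((d : ℝ) / 2) := rpow_pos_of_pos ha _
  have h1 : a ^ ((d:ℝ)/2) < a ^ ((d : ℝ) / 2) + ξ ^ ((d : ℝ) / 2) :=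
    lt_add_of_pos_right _ (rpow_pos_of_pos hξ _)
  have h2 : (a ^ ((d:ℝ)/2)) ^ (2/(d:ℝ)) < (a ^ ((d : ℝ) / 2) + ξ ^ ((d : ℝ) / 2)) ^ (2/(d:ℝ)) :=
    Real.rpow_lt_rpow hA.le h1 (by have := hd0 hd; positivity)
  have h3 : (a ^ ((d:ℝ)/2)) ^ (2/(d:ℝ)) = a := by
    rw [← Real.rpow_mul ha.le, mul_halves hd, Real.rpow_one]
  unfold psi
  linarith [h2, h3.symm ▸ h2]

lemma rpow_halves_cancel (hd : 2 ≤ d) {x : ℝ} (hx : 0 ≤ x) :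
    (x ^ ((d:ℝ)/2)) ^ (2/(d:ℝ)) = x := by
  rw [← Real.rpow_mul hx, mul_halves hd, Real.rpow_one]

lemma rpow_halves_cancel' (hd : 2 ≤ d) {x : ℝ} (hx : 0 ≤ x) :
    (x ^ (2/(d:ℝ))) ^ ((d:ℝ)/2) = x := by
  rw [← Real.rpow_mul hx]
  rw [show 2/(d:ℝ) * ((d:ℝ)/2) = 1 by have : (d:ℝ) ≠ 0 := (hd0 hd).ne'; field_simp,
    Real.rpow_one]

lemma Psi_psi (hd : 2 ≤ d) (ha : 0 < a) {ξ : ℝ} (hξ : 0 ≤ ξ) :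
    Psi d a (psi d a ξ) = ξ := by
  have hA : (0:ℝ) < a ^ ((d : ℝ) / 2) := rpow_pos_of_pos ha _
  have hu : (0:ℝ) < a ^ ((d : ℝ) / 2) + ξ ^ ((d : ℝ) / 2) :=
    add_pos_of_pos_of_nonneg hA (rpow_nonneg hξ _)
  unfold Psi psi
  rw [show -a + (a ^ ((d : ℝ) / 2) + ξ ^ ((d : ℝ) / 2)) ^ (2/(d:ℝ)) + a
      = (a ^ ((d : ℝ) / 2) + ξ ^ ((d : ℝ) / 2)) ^ (2/(d:ℝ)) by ring,
    rpow_halves_cancel' hd hu.le, add_sub_cancel_left, rpow_halves_cancel hd hξ]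

lemma Psi_pos (hd : 2 ≤ d) (ha : 0 < a) {t : ℝ} (ht : 0 < t) : 0 < Psi d a t := by
  have h1 : a ^ ((d:ℝ)/2) < (t + a) ^ ((d:ℝ)/2) :=
    Real.rpow_lt_rpow ha.le (by linarith) (by have := hd0 hd; positivity)
  exact rpow_pos_of_pos (by linarith) _

lemma psi_Psi (hd : 2 ≤ d) (ha : 0 < a) {t : ℝ} (ht : 0 < t) :
    psi d a (Psi d a t) = t := by
  have h1 : a ^ ((d:ℝ)/2) < (t + a) ^ ((d:ℝ)/2) :=
    Real.rpow_lt_rpow ha.le (by linarith) (by have := hd0 hd; positivity)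
  have hw : (0:ℝ) ≤ (t + a) ^ ((d:ℝ)/2) - a ^ ((d:ℝ)/2) := by linarith
  unfold psi Psi
  rw [rpow_halves_cancel' hd hw]
  rw [show a ^ ((d:ℝ)/2) + ((t + a) ^ ((d:ℝ)/2) - a ^ ((d:ℝ)/2)) = (t+a) ^ ((d:ℝ)/2) by ring,
    rpow_halves_cancel hd (by linarith : (0:ℝ) ≤ t + a)]
  ring

lemma continuous_psi (hd : 2 ≤ d) : Continuous (psi d a) := by
  have h1 : Continuous fun ξ : ℝ => a ^ ((d : ℝ) / 2) + ξ ^ ((d : ℝ) / 2) :=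
    continuous_const.add (continuous_rpow_const (by positivity))
  exact continuous_const.add (h1.rpow_const fun x => Or.inr (by positivity))

lemma psi_image (hd : 2 ≤ d) (ha : 0 < a) (s : Set ℝ) :
    psi d a '' (psi d a ⁻¹' s ∩ Set.Ioi 0) = s ∩ Set.Ioi 0 := by
  ext t
  constructor
  · rintro ⟨x, ⟨hxs, hx0⟩, rfl⟩
    exact ⟨hxs, psi_pos hd ha hx0⟩
  · rintro ⟨hts, ht0⟩
    exact ⟨Psi d a t, ⟨by simp [psi_Psi hd ha ht0, hts], Psi_pos hd ha ht0⟩,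
      psi_Psi hd ha ht0⟩

lemma psi_injOn (hd : 2 ≤ d) (ha : 0 < a) (s : Set ℝ) :
    Set.InjOn (psi d a) (psi d a ⁻¹' s ∩ Set.Ioi 0) := by
  intro x hx y hy hxy
  have := Psi_psi hd ha (le_of_lt hx.2)
  rw [← this, hxy, Psi_psi hd ha (le_of_lt hy.2)]

end Aux

/-! ### Polar coordinates for lintegrals -/

lemma lintegral_fun_norm_eu (d : ℕ) (hd : 1 ≤ d) (H : ℝ → ℝ≥0∞) (hH : Measurable H) :
    ∫⁻ x : EuclideanSpace ℝ (Fin d), H ‖x‖ =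
      (volume : Measure (EuclideanSpace ℝ (Fin d))).toSphere Set.univ *
        ∫⁻ r in Set.Ioi (0:ℝ), ENNReal.ofReal (r ^ (d - 1)) * H r := by
  set E := EuclideanSpace ℝ (Fin d)
  haveI : Nontrivial E := by
    have : 0 < Module.finrank ℝ E := by
      rw [finrank_euclideanSpace_fin]; omega
    exact Module.nontrivial_of_finrank_pos this
  have hdim : Module.finrank ℝ E = d := finrank_euclideanSpace_fin
  have h0 : ∫⁻ x : E, H ‖x‖ = ∫⁻ x : ({0}ᶜ : Set E), H ‖x.1‖ ∂((volume : Measure E).comap (↑)) := by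
    rw [lintegral_subtype_comap (measurableSet_singleton (0:E)).compl (fun a : E => H ‖a‖),
      restrict_compl_singleton]
  rw [h0]
  have mp := (volume : Measure E).measurePreserving_homeomorphUnitSphereProd
  have hF : Measurable fun p : Metric.sphere (0:E) 1 × Set.Ioi (0:ℝ) => H p.2.1 :=
    hH.comp (measurable_subtype_coe.comp measurable_snd)
  have h1 := mp.lintegral_comp hF
  have h2 : ∫⁻ x : ({0}ᶜ : Set E), H ‖x.1‖ ∂((volume : Measure E).comap (↑)) =
      ∫⁻ p : Metric.sphere (0:E) 1 × Set.Ioi (0:ℝ), H p.2.1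
        ∂((volume : Measure E).toSphere.prod (.volumeIoiPow (Module.finrank ℝ E - 1))) := by
    rw [← h1]; show _ = ∫⁻ a : ({0}ᶜ : Set E), H (‖a.1‖ / 1) ∂_; simp only [div_one]
  rw [h2, MeasureTheory.lintegral_prod _ hF.aemeasurable]
  have h3 : ∫⁻ y : Set.Ioi (0:ℝ), H y.1 ∂(Measure.volumeIoiPow (Module.finrank ℝ E - 1)) =
      ∫⁻ r in Set.Ioi (0:ℝ), ENNReal.ofReal (r ^ (d - 1)) * H r := by
    rw [Measure.volumeIoiPow,
      lintegral_withDensity_eq_lintegral_mul _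
        ((measurable_subtype_coe.pow_const _).ennreal_ofReal)
        (show Measurable fun y : Set.Ioi (0:ℝ) => H y.1 from hH.comp measurable_subtype_coe)]
    simp only [Pi.mul_apply]
    rw [hdim]
    exact lintegral_subtype_comap measurableSet_Ioi
      (fun r : ℝ => ENNReal.ofReal (r ^ (d - 1)) * H r)
  simp only [h3]
  rw [lintegral_const, mul_comm]

lemma toSphere_univ_eu (d : ℕ) (hd : 2 ≤ d) :
    (volume : Measure (EuclideanSpace ℝ (Fin d))).toSphere Set.univ
      = ENNReal.ofReal (2 * (π ^ ((d:ℝ)/2) / Real.Gamma ((d:ℝ)/2))) := by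
  have hdR : (0:ℝ) < (d:ℝ) := hd0 hd
  haveI : Nontrivial (EuclideanSpace ℝ (Fin d)) := by
    have : 0 < Module.finrank ℝ (EuclideanSpace ℝ (Fin d)) := by
      rw [finrank_euclideanSpace_fin]; omega
    exact Module.nontrivial_of_finrank_pos this
  haveI : Nonempty (Fin d) := ⟨⟨0, by omega⟩⟩
  rw [Measure.toSphere_apply_univ, EuclideanSpace.volume_ball, finrank_euclideanSpace_fin]
  simp only [Fintype.card_fin, ENNReal.ofReal_one, one_pow, one_mul]
  rw [← ENNReal.ofReal_natCast d, ← ENNReal.ofReal_mul (by positivity)]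
  congr 1
  have hs : Real.sqrt π ^ d = π ^ ((d:ℝ)/2) := by
    rw [Real.sqrt_eq_rpow, ← Real.rpow_natCast (π ^ (1/(2:ℝ))) d, ← Real.rpow_mul pi_pos.le]
    congr 1
    ring
  have hg : Real.Gamma ((d:ℝ)/2 + 1) = ((d:ℝ)/2) * Real.Gamma ((d:ℝ)/2) :=
    Real.Gamma_add_one (by positivity)
  have hΓ : Real.Gamma ((d:ℝ)/2) ≠ 0 := (Real.Gamma_pos_of_pos (by positivity)).ne'
  rw [hs, hg]
  field_simp

/-! ### Matrix change of variables -/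

open scoped MatrixOrder in
noncomputable def matSqrt {d : ℕ} (S : Matrix (Fin d) (Fin d) ℝ) : Matrix (Fin d) (Fin d) ℝ :=
  CFC.sqrt S

open scoped MatrixOrder in
lemma matSqrt_mul_self {d : ℕ} {S : Matrix (Fin d) (Fin d) ℝ} (hS : S.PosSemidef) :
    matSqrt S * matSqrt S = S :=
  CFC.sqrt_mul_sqrt_self S hS.nonneg

open scoped MatrixOrder in
lemma matSqrt_isHermitian {d : ℕ} (S : Matrix (Fin d) (Fin d) ℝ) : (matSqrt S).IsHermitian :=
  (CFC.sqrt_nonneg S).posSemidef.isHermitian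

lemma measurable_quadForm {d : ℕ} (μv : Fin d → ℝ) (S : Matrix (Fin d) (Fin d) ℝ) :
    Measurable (quadForm μv S) := by
  unfold quadForm dotProduct Matrix.mulVec
  apply Finset.measurable_sum
  intro i _
  apply Measurable.mul
  · exact (measurable_pi_apply i).sub measurable_const
  · apply Finset.measurable_sum
    intro j _
    exact measurable_const.mul ((measurable_pi_apply j).sub measurable_const)

lemma quadForm_shift {d : ℕ} (μv : Fin d → ℝ) (S : Matrix (Fin d) (Fin d) ℝ) (hS : S.PosDef)
    (y : Fin d → ℝ) :
    quadForm μv S (μv + (matSqrt S) *ᵥ y) = y ⬝ᵥ y := by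
  set R := matSqrt S with hR
  have hRR : R * R = S := matSqrt_mul_self hS.posSemidef
  have hdetS : 0 < S.det := hS.det_pos
  have hdetR : R.det ≠ 0 := by
    intro h
    rw [← hRR, Matrix.det_mul, h, mul_zero] at hdetS
    exact lt_irrefl _ hdetS
  have hRsym : Rᵀ = R := by
    have := matSqrt_isHermitian S
    rwa [Matrix.IsHermitian, Matrix.conjTranspose_eq_transpose_of_trivial] at this
  have hone : R * (S⁻¹ * R) = 1 := by
    rw [← hRR, Matrix.mul_inv_rev, ← Matrix.mul_assoc, ← Matrix.mul_assoc,
      Matrix.mul_nonsing_inv R hdetR.isUnit, Matrix.one_mul,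
      Matrix.nonsing_inv_mul R hdetR.isUnit]
  unfold quadForm
  rw [add_sub_cancel_left, Matrix.mulVec_mulVec, Matrix.dotProduct_mulVec,
    ← Matrix.vecMul_transpose, hRsym, Matrix.vecMul_vecMul, hone, Matrix.vecMul_one]

lemma lintegral_quadForm {d : ℕ} (μv : Fin d → ℝ) (S : Matrix (Fin d) (Fin d) ℝ) (hS : S.PosDef)
    (H : ℝ → ℝ≥0∞) (hH : Measurable H) :
    ∫⁻ x : Fin d → ℝ, H (quadForm μv S x) =
      ENNReal.ofReal (Real.sqrt S.det) * ∫⁻ y : Fin d → ℝ, H (y ⬝ᵥ y) := by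
  set R := matSqrt S with hRdef
  have hRR : R * R = S := matSqrt_mul_self hS.posSemidef
  have hdetS : 0 < S.det := hS.det_pos
  have hdetR : R.det ≠ 0 := by
    intro h
    rw [← hRR, Matrix.det_mul, h, mul_zero] at hdetS
    exact lt_irrefl _ hdetS
  have hsqrt : Real.sqrt S.det = |R.det| := by
    rw [← hRR, Matrix.det_mul, ← sq, Real.sqrt_sq_eq_abs]
  have hdetL : LinearMap.det (Matrix.toLin' R) = R.det := LinearMap.det_toLin' R
  have hmap : volume.map (Matrix.toLin' R) = ENNReal.ofReal |R.det|⁻¹ • volume := by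
    have := Measure.map_linearMap_addHaar_eq_smul_addHaar (μ := volume)
      (f := Matrix.toLin' R) (by rw [hdetL]; exact hdetR)
    rwa [hdetL, abs_inv] at this
  have hF : Measurable fun x : Fin d → ℝ => H (quadForm μv S x) :=
    hH.comp (measurable_quadForm μv S)
  have key : ∫⁻ y : Fin d → ℝ, H (y ⬝ᵥ y) =
      ENNReal.ofReal |R.det|⁻¹ * ∫⁻ x : Fin d → ℝ, H (quadForm μv S x) := by
    have h1 : ∀ y : Fin d → ℝ, H (y ⬝ᵥ y) = H (quadForm μv S (μv + R *ᵥ y)) := fun y => by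
      rw [quadForm_shift μv S hS y]
    simp_rw [h1]
    have hfmeas : Measurable fun x : Fin d → ℝ => H (quadForm μv S (μv + x)) :=
      hH.comp ((measurable_quadForm μv S).comp (measurable_const_add μv))
    have hLmeas' : Measurable (Matrix.toLin' R) :=
      (LinearMap.continuous_of_finiteDimensional _).measurable
    have h2 := lintegral_map (μ := volume) hfmeas hLmeas'
    simp only [Matrix.toLin'_apply] at h2
    rw [← h2, hmap, lintegral_smul_measure,
      lintegral_add_left_eq_self (fun x : Fin d → ℝ => H (quadForm μv S x)) μv, smul_eq_mul]
  rw [key, ← mul_assoc, ← ENNReal.ofReal_mul (Real.sqrt_nonneg _), hsqrt,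
    mul_inv_cancel₀ (abs_ne_zero.mpr hdetR), ENNReal.ofReal_one, one_mul]

lemma lintegral_dot_eq_eu (d : ℕ) (H : ℝ → ℝ≥0∞) (hH : Measurable H) :
    ∫⁻ y : Fin d → ℝ, H (y ⬝ᵥ y) =
      ∫⁻ z : EuclideanSpace ℝ (Fin d), H (‖z‖ ^ 2) := by
  have mp := EuclideanSpace.volume_preserving_symm_measurableEquiv_toLp (Fin d)
  have hmeas : Measurable fun y : Fin d → ℝ => H (y ⬝ᵥ y) := by
    apply hH.comp
    unfold dotProduct
    exact Finset.measurable_sum _ fun i _ =>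
      (measurable_pi_apply i).mul (measurable_pi_apply i)
  rw [← mp.lintegral_comp hmeas]
  apply lintegral_congr
  intro z
  congr 1
  have : (MeasurableEquiv.toLp 2 (Fin d → ℝ)).symm z ⬝ᵥ (MeasurableEquiv.toLp 2 (Fin d → ℝ)).symm z
      = ∑ i, z i * z i := rfl
  rw [this, EuclideanSpace.norm_eq,
    Real.sq_sqrt (by positivity : (0:ℝ) ≤ ∑ i, ‖z i‖ ^ 2)]
  simp [Real.norm_eq_abs, sq_abs, sq]

/-! ### One-dimensional substitutions -/

lemma lintegral_image_eq_lintegral_abs_deriv_mul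
    {s : Set ℝ} {f f' : ℝ → ℝ} (hs : MeasurableSet s)
    (hf' : ∀ x ∈ s, HasDerivWithinAt f (f' x) s x) (hf : Set.InjOn f s) (g : ℝ → ℝ≥0∞) :
    ∫⁻ x in f '' s, g x = ∫⁻ x in s, ENNReal.ofReal |f' x| * g (f x) := by
  simpa only [ContinuousLinearMap.det_toSpanSingleton] using
    MeasureTheory.lintegral_image_eq_lintegral_abs_det_fderiv_mul volume hs
      (fun x hx => (hf' x hx).hasFDerivWithinAt) hf g

lemma sq_image_Ioi : (fun x : ℝ => x ^ 2) '' Set.Ioi 0 = Set.Ioi 0 := by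
  ext y
  constructor
  · rintro ⟨x, hx, rfl⟩
    simp only [Set.mem_Ioi] at *
    positivity
  · intro hy
    simp only [Set.mem_Ioi] at hy
    exact ⟨Real.sqrt y, by simpa using Real.sqrt_pos.mpr hy, Real.sq_sqrt hy.le⟩

lemma lintegral_sq_subst (d : ℕ) (hd : 2 ≤ d) (G : ℝ → ℝ≥0∞) :
    ∫⁻ t in Set.Ioi (0:ℝ), ENNReal.ofReal (t ^ (((d:ℝ) - 2)/2)) * G t
      = 2 * ∫⁻ r in Set.Ioi (0:ℝ), ENNReal.ofReal (r ^ (d - 1)) * G (r ^ 2) := by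
  have hderiv : ∀ x ∈ Set.Ioi (0:ℝ),
      HasDerivWithinAt (fun x : ℝ => x ^ 2) (2 * x) (Set.Ioi 0) x := fun x _ => by
    simpa using (hasDerivAt_pow 2 x).hasDerivWithinAt
  have hinj : Set.InjOn (fun x : ℝ => x ^ 2) (Set.Ioi 0) := by
    intro x hx y hy h
    simp only [Set.mem_Ioi] at hx hy
    simp only [] at h
    nlinarith [sq_nonneg (x - y), sq_nonneg (x + y)]
  have := _root_.lintegral_image_eq_lintegral_abs_deriv_mul (f := fun x : ℝ => x ^ 2)
    (f' := fun x : ℝ => 2 * x) measurableSet_Ioi hderiv hinj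
    (fun t => ENNReal.ofReal (t ^ (((d:ℝ) - 2)/2)) * G t)
  rw [sq_image_Ioi] at this
  rw [this, ← lintegral_const_mul' _ _ (by norm_num : (2:ℝ≥0∞) ≠ ⊤)]
  apply setLIntegral_congr_fun measurableSet_Ioi
  intro x hx; beta_reduce
  simp only [Set.mem_Ioi] at hx
  have h1 : ((x:ℝ) ^ 2) ^ (((d:ℝ) - 2)/2) = x ^ ((d:ℝ) - 2) := by
    rw [← Real.rpow_natCast x 2, ← Real.rpow_mul hx.le]
    congr 1
    push_cast
    ring
  have h2 : (x:ℝ) ^ (d - 1) = x ^ ((d:ℝ) - 1) := by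
    rw [← Real.rpow_natCast x (d - 1)]
    congr 1
    push_cast [Nat.cast_sub (by omega : 1 ≤ d)]
    ring
  have h3 : |2 * x| * (x ^ ((d:ℝ) - 2)) = 2 * x ^ ((d:ℝ) - 1) := by
    rw [abs_of_pos (by linarith), mul_assoc]
    congr 1
    rw [show x * x ^ ((d:ℝ) - 2) = x ^ (1:ℝ) * x ^ ((d:ℝ) - 2) by rw [Real.rpow_one],
      ← Real.rpow_add hx]
    congr 1
    ring
  rw [h1, h2, ← mul_assoc, ← ENNReal.ofReal_mul (abs_nonneg _), h3,
    ENNReal.ofReal_mul (by norm_num), ENNReal.ofReal_ofNat, mul_assoc]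

/-! ### Main theorem -/

/-- the pushforward of the law of `X` under `x ↦ ψ_a((x-μ)ᵀΣ⁻¹(x-μ))` is the
measure on `(0,∞)` with Lebesgue density `s_d·ρ_a`. -/
theorem pushforward_density (d : ℕ) (hd : 2 ≤ d) (a : ℝ) (ha : 0 < a)
    (g : ℝ → ℝ) (hgm : Measurable g) (hg0 : ∀ x, 0 ≤ g x)
    (μv : Fin d → ℝ) (S : Matrix (Fin d) (Fin d) ℝ) (hS : S.PosDef)
    {Ω : Type*} [MeasurableSpace Ω] (P : Measure Ω) [IsProbabilityMeasure P]
    (X : Ω → (Fin d → ℝ)) (hXm : Measurable X)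
    (hlaw : Measure.map X P =
      volume.withDensity (fun x => ENNReal.ofReal (ellDensity g μv S x))) :
    Measure.map (fun x => psi d a (quadForm μv S x)) (Measure.map X P) =
      (volume.restrict (Set.Ioi (0 : ℝ))).withDensity
        (fun t => ENNReal.ofReal
          ((π ^ ((d : ℝ) / 2) / Real.Gamma ((d : ℝ) / 2)) * rho d a g t)) := by
  classical
  have hdR : (0:ℝ) < (d:ℝ) := hd0 hd
  set sd : ℝ := π ^ ((d : ℝ) / 2) / Real.Gamma ((d : ℝ) / 2) with hsd
  have hsd0 : 0 ≤ sd := div_nonneg (rpow_nonneg pi_pos.le _)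
    (Real.Gamma_pos_of_pos (by positivity)).le
  set c : ℝ := |S.det| ^ (-(1 : ℝ) / 2) with hc
  have hc0 : 0 ≤ c := rpow_nonneg (abs_nonneg _) _
  have hcs : Real.sqrt S.det * c = 1 := by
    rw [hc, abs_of_pos hS.det_pos, Real.sqrt_eq_rpow, ← Real.rpow_add hS.det_pos]
    norm_num
  rw [hlaw]
  have hpsim : Measurable (psi d a) := (continuous_psi (a := a) hd).measurable
  have hQ : Measurable (quadForm μv S) := measurable_quadForm μv S
  have hT : Measurable fun x => psi d a (quadForm μv S x) := hpsim.comp hQ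
  ext s hs
  rw [Measure.map_apply hT hs, withDensity_apply _ (hT hs),
    withDensity_apply _ hs, Measure.restrict_restrict hs]
  set B : Set ℝ := psi d a ⁻¹' s with hB
  have hBmeas : MeasurableSet B := hpsim hs
  -- RHS transformation via the substitution t = psi x
  have hRHS : ∫⁻ t in s ∩ Set.Ioi 0, ENNReal.ofReal (sd * rho d a g t)
      = ∫⁻ x in B ∩ Set.Ioi 0, ENNReal.ofReal (sd * gtilde d g x) := by
    rw [← psi_image hd ha s,
      _root_.lintegral_image_eq_lintegral_abs_deriv_mul (f' := Dpsi d a)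
        (hBmeas.inter measurableSet_Ioi)
        (fun x hx => (hasDerivAt_psi hd ha hx.2).hasDerivWithinAt)
        (psi_injOn hd ha s) _]
    apply setLIntegral_congr_fun (hBmeas.inter measurableSet_Ioi)
    intro x hx; beta_reduce
    have hx0 : (0:ℝ) < x := hx.2
    have hD := Dpsi_pos hd ha hx0
    rw [abs_of_pos hD, ← ENNReal.ofReal_mul hD.le]
    congr 1
    unfold rho za
    rw [Psi_psi hd ha hx0.le, deriv_psi hd ha hx0]
    field_simp
  rw [hRHS]
  -- LHS transformation
  set K : ℝ → ℝ≥0∞ := fun t => B.indicator (fun t => ENNReal.ofReal (c * g t)) t with hK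
  have hKmeas : Measurable K :=
    ((measurable_const.mul hgm).ennreal_ofReal).indicator hBmeas
  have hpre : (fun x => psi d a (quadForm μv S x)) ⁻¹' s = quadForm μv S ⁻¹' B := rfl
  have hLHS1 : ∫⁻ x in (fun x => psi d a (quadForm μv S x)) ⁻¹' s,
      ENNReal.ofReal (ellDensity g μv S x) = ∫⁻ x : Fin d → ℝ, K (quadForm μv S x) := by
    rw [hpre, ← lintegral_indicator (hQ hBmeas)]
    apply lintegral_congr
    intro x
    simp only [hK, Set.indicator_apply, Set.mem_preimage]
    by_cases h : quadForm μv S x ∈ B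
    · simp only [if_pos h]
      rfl
    · simp only [if_neg h]
  rw [hLHS1, lintegral_quadForm μv S hS K hKmeas, lintegral_dot_eq_eu d K hKmeas]
  have hH'meas : Measurable fun r : ℝ => K (r ^ 2) :=
    hKmeas.comp (measurable_id.pow_const 2)
  have hpolar := lintegral_fun_norm_eu d (by omega) (fun r => K (r ^ 2)) hH'meas
  rw [hpolar, toSphere_univ_eu d hd]
  have hsub := lintegral_sq_subst d hd K
  -- now reduce everything to the integral over B ∩ Ioi 0
  have hIt : ∫⁻ t in Set.Ioi (0:ℝ), ENNReal.ofReal (t ^ (((d:ℝ) - 2)/2)) * K t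
      = ∫⁻ x in B ∩ Set.Ioi 0, ENNReal.ofReal (x ^ (((d:ℝ) - 2)/2)) * ENNReal.ofReal (c * g x) := by
    have heq : ∀ t : ℝ, ENNReal.ofReal (t ^ (((d:ℝ) - 2)/2)) * K t
        = B.indicator (fun t => ENNReal.ofReal (t ^ (((d:ℝ) - 2)/2)) * ENNReal.ofReal (c * g t)) t := by
      intro t
      simp only [hK, Set.indicator_apply]
      by_cases h : t ∈ B
      · simp only [if_pos h]
      · simp only [if_neg h, mul_zero]
    simp_rw [heq]
    rw [lintegral_indicator hBmeas, Measure.restrict_restrict hBmeas]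
  rw [ENNReal.ofReal_mul (by norm_num : (0:ℝ) ≤ 2), ENNReal.ofReal_ofNat]
  rw [show ENNReal.ofReal (Real.sqrt S.det) *
        (2 * ENNReal.ofReal sd * ∫⁻ r in Set.Ioi (0:ℝ), ENNReal.ofReal (r ^ (d-1)) * K (r^2))
      = ENNReal.ofReal (Real.sqrt S.det) * (ENNReal.ofReal sd *
        (2 * ∫⁻ r in Set.Ioi (0:ℝ), ENNReal.ofReal (r ^ (d-1)) * K (r^2))) by ring]
  rw [← hsub, hIt,
    ← lintegral_const_mul' (ENNReal.ofReal sd) _ ENNReal.ofReal_ne_top,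
    ← lintegral_const_mul' (ENNReal.ofReal (Real.sqrt S.det)) _ ENNReal.ofReal_ne_top]
  apply setLIntegral_congr_fun (hBmeas.inter measurableSet_Ioi)
  intro x hx; beta_reduce
  have hx0 : (0:ℝ) < x := hx.2
  rw [← ENNReal.ofReal_mul (by positivity), ← ENNReal.ofReal_mul (by positivity),
    ← ENNReal.ofReal_mul (Real.sqrt_nonneg _)]
  congr 1
  unfold gtilde
  linear_combination (sd * (x ^ (((d:ℝ) - 2)/2) * g x)) * hcs
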